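/- arXiv:2412.10066 — 5 statements merged into one kernel-verified Lean document; each statement's English description precedes it below -/
import Mathlib

section
/- There is no infinite sequence A₀, A₁, A₂, … of (possibly non-ground) M-constrained congruence classes such that for every i ≥ 0 the class Aᵢ is not subsumed by any class in {A₀, …, A_{i−1}}. -/
namespace NGCC

inductive Tm (F : Type) : Type
  | var : ℕ → Tm F
  | app : F → List (Tm F) → Tm F

instance {F : Type} : Inhabited (Tm F) := ⟨Tm.var 0⟩

namespace Tm
variable {F : Type}

def subst (σ : ℕ → Tm F) : Tm F → Tm F
  | var x => σ x
  | app f ts => app f (ts.attach.map fun t => t.1.subst σ)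
  decreasing_by simp only [app.sizeOf_spec]; have h := List.sizeOf_lt_of_mem t.2; omega

def varsList : Tm F → List ℕ
  | var x => [x]
  | app _ ts => (ts.attach.map fun t => t.1.varsList).flatten
  decreasing_by simp only [app.sizeOf_spec]; have h := List.sizeOf_lt_of_mem t.2; omega

def varsIn (t : Tm F) : Set ℕ := {x | x ∈ t.varsList}

def Ground (t : Tm F) : Prop := t.varsList = []

def size : Tm F → ℕ
  | var _ => 1
  | app _ ts => 1 + (ts.attach.map fun t => t.1.size).sum
  decreasing_by simp only [app.sizeOf_spec]; have h := List.sizeOf_lt_of_mem t.2; omega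

def count (x : ℕ) : Tm F → ℕ
  | var y => if y = x then 1 else 0
  | app _ ts => (ts.attach.map fun t => count x t.1).sum
  decreasing_by simp only [app.sizeOf_spec]; have h := List.sizeOf_lt_of_mem t.2; omega

def eval {α : Type} (I : F → List α → α) (v : ℕ → α) : Tm F → α
  | var x => v x
  | app f ts => I f (ts.attach.map fun t => t.1.eval I v)
  decreasing_by simp only [app.sizeOf_spec]; have h := List.sizeOf_lt_of_mem t.2; omega

end Tm


abbrev Subst (F : Type) := ℕ → Tm F

def Subst.dom {F : Type} (σ : Subst F) : Set ℕ := {x | σ x ≠ Tm.var x}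

def Subst.comp {F : Type} (σ δ : Subst F) : Subst F := fun x => (σ x).subst δ

structure CTerm (F : Type) where
  constr : Set (Tm F)
  term : Tm F

abbrev CClass (F : Type) := Set (CTerm F)

variable {F : Type}

/-- Application of a substitution to a constraint (set of atoms `u ∈ M`). -/
def substConstr (Γ : Set (Tm F)) (σ : Subst F) : Set (Tm F) := (fun u => u.subst σ) '' Γ

def CTerm.subst (ct : CTerm F) (σ : Subst F) : CTerm F :=
  ⟨substConstr ct.constr σ, ct.term.subst σ⟩

def substClass (A : CClass F) (σ : Subst F) : CClass F := (fun ct => ct.subst σ) '' A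

/-- `Γσ` is true: every atom of `Γσ` belongs to `M`. -/
def ConstrHolds (M : Set (Tm F)) (Γ : Set (Tm F)) (σ : Subst F) : Prop :=
  substConstr Γ σ ⊆ M

/-- Satisfiability of a constraint with respect to `M`. -/
def ConstrSat (M : Set (Tm F)) (Γ : Set (Tm F)) : Prop :=
  ∃ σ : Subst F, ConstrHolds M Γ σ

/-- `σ` is grounding for the class `A` (for all its constrained terms). -/
def GroundingForClass (σ : Subst F) (A : CClass F) : Prop :=
  ∀ ct ∈ A, (ct.term.subst σ).Ground ∧ ∀ u ∈ ct.constr, (u.subst σ).Ground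

/-- Separating variables of a class. -/
def sepVars (A : CClass F) : Set ℕ := ⋂ ct ∈ A, (CTerm.term ct).varsIn

/-- All variables of the terms of a class. -/
def termVars (A : CClass F) : Set ℕ := ⋃ ct ∈ A, (CTerm.term ct).varsIn

/-- Free variables of a class. -/
def freeVars (A : CClass F) : Set ℕ := termVars A \ sepVars A

/-- All variables occurring in a class (terms and constraints). -/
def varsAll (A : CClass F) : Set ℕ :=
  ⋃ ct ∈ A, ((CTerm.term ct).varsIn ∪ ⋃ u ∈ CTerm.constr ct, u.varsIn)

/-- `gnd'(A)`. -/
def gnd' (M : Set (Tm F)) (A : CClass F) : Set (CClass F) :=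
  { B | ∃ σ : Subst F, Subst.dom σ = sepVars A ∧ (∀ x ∈ Subst.dom σ, (σ x).Ground) ∧
      B = { ct' | ∃ ct ∈ A, ConstrSat M (substConstr (CTerm.constr ct) σ) ∧ ct' = ct.subst σ } }

/-- `gnd(A)`: sets of ground terms. -/
def gnd (M : Set (Tm F)) (A : CClass F) : Set (Set (Tm F)) :=
  { S | ∃ B ∈ gnd' M A,
      S = { t | ∃ σ : Subst F, GroundingForClass σ B ∧
              ∃ ct ∈ B, ConstrHolds M (CTerm.constr ct) σ ∧ t = (CTerm.term ct).subst σ } }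

/-- The elements of `gnd(A)` regarded as classes of constrained ground terms. -/
def gndCl (M : Set (Tm F)) (A : CClass F) : Set (CClass F) :=
  { S | ∃ B ∈ gnd' M A,
      S = { ct' | ∃ σ : Subst F, GroundingForClass σ B ∧
              ∃ ct ∈ B, ConstrHolds M (CTerm.constr ct) σ ∧ ct' = ct.subst σ } }

/-- `B` subsumes `A`. -/
def Subsumes (M : Set (Tm F)) (B A : CClass F) : Prop :=
  ∀ A' ∈ gnd M A, ∃ B' ∈ gnd M B, A' ⊆ B'

/-- `A` is `M`-constrained: the atom `sᵢ ∈ M` occurs in `Γᵢ` for each `Γᵢ ∥ sᵢ ∈ A`. -/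
def MConstrained (A : CClass F) : Prop := ∀ ct ∈ A, CTerm.term ct ∈ CTerm.constr ct

/-- `ρ` is a renaming of the free variables of `A` to fresh variables. -/
def IsNormRenaming (A : CClass F) (ρ : Subst F) : Prop :=
  (∀ x, ∃ y, ρ x = Tm.var y) ∧ (∀ x, x ∉ freeVars A → ρ x = Tm.var x) ∧
  (∀ x ∈ freeVars A, ∀ x' ∈ freeVars A, ρ x = ρ x' → x = x') ∧
  (∀ x ∈ freeVars A, ∀ y, ρ x = Tm.var y → y ∉ varsAll A)

/-- The normal class `norm(A)` for the renaming `ρ`. -/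
def normC (A : CClass F) (ρ : Subst F) : CClass F :=
  { ct' | ∃ ct ∈ A, ct' = ⟨CTerm.constr ct ∪ substConstr (CTerm.constr ct) ρ, CTerm.term ct⟩ } ∪
  { ct' | ∃ ct ∈ A, ((CTerm.term ct).varsIn ∩ freeVars A).Nonempty ∧
      ct' = ⟨CTerm.constr ct ∪ substConstr (CTerm.constr ct) ρ, (CTerm.term ct).subst ρ⟩ }

/-- `Aμ` for a grounding substitution `μ`: the set of ground terms
`{sμ | Γ ∥ s ∈ A and Γμ true}`. -/
def applyClass (M : Set (Tm F)) (A : CClass F) (μ : Subst F) : Set (Tm F) :=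
  { t | ∃ ct ∈ A, ConstrHolds M (CTerm.constr ct) μ ∧ t = (CTerm.term ct).subst μ }

/-- Subterm relation. -/
inductive Subterm {F : Type} : Tm F → Tm F → Prop
  | refl (t : Tm F) : Subterm t t
  | app {s t : Tm F} (f : F) (ts : List (Tm F)) : t ∈ ts → Subterm s t → Subterm s (Tm.app f ts)

/-- `s` occurs as a (sub)term in `Π`. -/
def OccursIn (s : Tm F) (P : Set (CClass F)) : Prop :=
  ∃ A ∈ P, ∃ ct ∈ A, Subterm s (CTerm.term ct) ∨ ∃ u ∈ CTerm.constr ct, Subterm s u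

/-- `M` is `Π`-closed for the ground term `t`. -/
def PiClosed (M : Set (Tm F)) (P : Set (CClass F)) (t : Tm F) : Prop :=
  ∀ s, OccursIn s P → ∀ σ : Subst F, s.subst σ ∈ M →
    ∀ δ : Subst F, (∀ x, σ x ≠ δ x → δ x = t) → s.subst δ ∈ M

/-- Semantic equational consequence: every model of the (implicitly universally
quantified) equations is a model of `s ≈ t`. -/
def Entails (Eqs : Set (Tm F × Tm F)) (s t : Tm F) : Prop :=
  ∀ (α : Type) (_ : Nonempty α) (I : F → List α → α) (v : ℕ → α),
    (∀ e ∈ Eqs, ∀ w : ℕ → α, Tm.eval I w e.1 = Tm.eval I w e.2) →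
    Tm.eval I v s = Tm.eval I v t

/-- `gnd_M(E)`: ground instances of equations of `E` with all ground terms in `M`. -/
def gndM (M : Set (Tm F)) (E : Set (Tm F × Tm F)) : Set (Tm F × Tm F) :=
  { e | ∃ p ∈ E, ∃ σ : Subst F,
      e = (Tm.subst σ p.1, Tm.subst σ p.2) ∧ Tm.subst σ p.1 ∈ M ∧ Tm.subst σ p.2 ∈ M }

def IsUnifier (μ : Subst F) (s t : Tm F) : Prop := s.subst μ = t.subst μ

def IsMGU (μ : Subst F) (s t : Tm F) : Prop :=
  IsUnifier μ s t ∧ ∀ τ : Subst F, IsUnifier τ s t → ∃ δ : Subst F, τ = Subst.comp μ δ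

/-- Simultaneous most general unifier of the equations `s₁ = t₁` and `s₂ = t₂`. -/
def IsSimMGU (μ : Subst F) (s₁ t₁ s₂ t₂ : Tm F) : Prop :=
  IsUnifier μ s₁ t₁ ∧ IsUnifier μ s₂ t₂ ∧
  ∀ τ : Subst F, IsUnifier τ s₁ t₁ → IsUnifier τ s₂ t₂ → ∃ δ : Subst F, τ = Subst.comp μ δ

/-- Conjoin a constraint to every constrained term of a class. -/
def addConstr (A : CClass F) (Γ : Set (Tm F)) : CClass F :=
  { ct' | ∃ ct ∈ A, ct' = ⟨CTerm.constr ct ∪ Γ, CTerm.term ct⟩ }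

/-- The rules of the calculus CC(X). -/
inductive Step {F : Type} (M : Set (Tm F)) : Set (CClass F) → Set (CClass F) → Prop
  | merge (P : Set (CClass F)) (A B C' : CClass F) (ρA ρB μ : Subst F) (ct₁ ct₂ : CTerm F)
      (hA : A ∈ P) (hB : B ∈ P)
      (hρA : IsNormRenaming A ρA) (hρB : IsNormRenaming B ρB)
      (h1 : ct₁ ∈ A) (h2 : ct₂ ∈ B)
      (hmgu : IsMGU μ ct₁.term ct₂.term)
      (hC' : C' = substClass (addConstr (normC A ρA) (ct₁.constr ∪ ct₂.constr) ∪
                               addConstr (normC B ρB) (ct₁.constr ∪ ct₂.constr)) μ)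
      (hnsub : ∀ C ∈ P, ¬ Subsumes M C C') :
      Step M P (insert C' P)
  | deduction (P : Set (CClass F)) (A B C' : CClass F) (f : F)
      (ss ts ss' ts' : List (Tm F)) (Γ Δ : Set (Tm F)) (Γs Δs : List (Set (Tm F))) (μ : Subst F)
      (hA : A ∈ P) (hB : B ∈ P)
      (h1 : (⟨Γ, Tm.app f ss⟩ : CTerm F) ∈ A)
      (h2 : (⟨Δ, Tm.app f ts⟩ : CTerm F) ∈ B)
      (hl1 : ss'.length = ss.length) (hl2 : ts'.length = ss.length)
      (hl3 : ts.length = ss.length) (hl4 : Γs.length = ss.length) (hl5 : Δs.length = ss.length)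
      (hside : ∀ i < ss.length, ∃ D ∈ P, ∃ ρ : Subst F, IsNormRenaming D ρ ∧
          (⟨Γs[i]!, ss'[i]!⟩ : CTerm F) ∈ normC D ρ ∧ (⟨Δs[i]!, ts'[i]!⟩ : CTerm F) ∈ normC D ρ)
      (hmgu : IsSimMGU μ (Tm.app f ss') (Tm.app f ss) (Tm.app f ts') (Tm.app f ts))
      (hC' : C' = substClass
          ({⟨Γ ∪ Δ ∪ ⋃₀ {G | G ∈ Γs} ∪ ⋃₀ {G | G ∈ Δs}, Tm.app f ss'⟩,
            ⟨Γ ∪ Δ ∪ ⋃₀ {G | G ∈ Γs} ∪ ⋃₀ {G | G ∈ Δs}, Tm.app f ts'⟩} : CClass F) μ)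
      (hnsub : ∀ C ∈ P, ¬ Subsumes M C C') :
      Step M P (insert C' P)
  | subsump (P : Set (CClass F)) (A B : CClass F)
      (hA : A ∈ P) (hB : B ∈ P) (hne : A ≠ B) (hsub : Subsumes M B A) :
      Step M P (P \ {A})

/-- The single-term class `{f(x₁,…,x_k) ∈ M ∥ f(x₁,…,x_k)}`. -/
def singleTermClass (ar : F → ℕ) (f : F) : CClass F :=
  {⟨{Tm.app f ((List.range (ar f)).map Tm.var)}, Tm.app f ((List.range (ar f)).map Tm.var)⟩}

/-- The initial state `Π₀` of CC(X) for the equations `E`. -/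
def initState (ar : F → ℕ) (E : Set (Tm F × Tm F)) : Set (CClass F) :=
  { A | ∃ p ∈ E, A = ({⟨{p.1, p.2}, p.1⟩, ⟨{p.1, p.2}, p.2⟩} : CClass F) } ∪
  { A | ∃ f : F, A = singleTermClass ar f }

/-- `B` subsumes `A` by matching. -/
def SubsumesByMatching (M : Set (Tm F)) (B A : CClass F) : Prop :=
  ∃ σ : Subst F, Subst.dom σ ⊆ sepVars B ∧ (∀ x ∈ sepVars B, (σ x).varsIn ⊆ varsAll A) ∧
    ∀ ct ∈ A, ∃ τ : Subst F, Subst.dom τ ⊆ freeVars B ∧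
      (∀ y ∈ freeVars B, (τ y).varsIn ⊆ varsAll A) ∧
      ∃ ct' ∈ B, CTerm.term ct = ((CTerm.term ct').subst σ).subst τ ∧
        ∀ δ : Subst F, ConstrHolds M (CTerm.constr ct) δ →
          ∃ δ' : Subst F,
            ConstrHolds M (substConstr (substConstr (substConstr (CTerm.constr ct') σ) τ) δ) δ'

/-- `M` determined by the symbol-count ordering and a bound `β`. -/
def Mle (β : Tm F) : Set (Tm F) := { t | t.Ground ∧ t.size ≤ β.size }

def varsFinset (t : Tm F) : Finset ℕ := t.varsList.toFinset

/-- Truth of the LIA abstraction `lic(t ⪯ β)` under an integer assignment `v`. -/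
def licHolds (t β : Tm F) (v : ℕ → ℕ) : Prop :=
  (∀ x ∈ varsFinset t, 1 ≤ v x) ∧
  (∑ x ∈ varsFinset t, (t.count x : ℤ) * (v x : ℤ)) ≤
    (β.size : ℤ) - ((t.size : ℤ) - ∑ x ∈ varsFinset t, (t.count x : ℤ))


/-- There is no infinite sequence `A₀, A₁, A₂, …` of (possibly
non-ground) `M`-constrained congruence classes such that for every `i` the class
`Aᵢ` is not subsumed by any class in `{A₀, …, A_{i−1}}`. -/
theorem no_infinite_nonsubsumed_chain {F : Type} [Finite F] [Nonempty F]
    (M : Set (Tm F)) (hMfin : M.Finite) (hMg : ∀ t ∈ M, t.Ground) :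
    ¬ ∃ A : ℕ → CClass F,
        (∀ i, (A i).Finite ∧ MConstrained (A i)) ∧
        (∀ i j, j < i → ¬ Subsumes M (A j) (A i)) := by
  rintro ⟨A, hA, hns⟩
  -- every element of gnd M (A i) is a subset of M
  have hsub : ∀ i, gnd M (A i) ⊆ {S : Set (Tm F) | S ⊆ M} := by
    intro i S hS
    obtain ⟨B, hB, rfl⟩ := hS
    intro t ht
    obtain ⟨σ, hgr, ct, hct, hch, rfl⟩ := ht
    obtain ⟨σ₀, -, -, hBdef⟩ := hB
    rw [hBdef] at hct
    obtain ⟨ct₀, hct₀, -, rfl⟩ := hct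
    have hmem : (CTerm.subst ct₀ σ₀).term ∈ (CTerm.subst ct₀ σ₀).constr :=
      ⟨ct₀.term, (hA i).2 ct₀ hct₀, rfl⟩
    exact hch ⟨(CTerm.subst ct₀ σ₀).term, hmem, rfl⟩
  have hPfin : ({S : Set (Tm F) | S ⊆ M}).Finite := hMfin.finite_subsets
  have hQfin : ({T : Set (Set (Tm F)) | T ⊆ {S : Set (Tm F) | S ⊆ M}}).Finite :=
    hPfin.finite_subsets
  have : Finite ({T : Set (Set (Tm F)) | T ⊆ {S : Set (Tm F) | S ⊆ M}}) := hQfin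
  set g : ℕ → {T : Set (Set (Tm F)) | T ⊆ {S : Set (Tm F) | S ⊆ M}} :=
    fun i => ⟨gnd M (A i), hsub i⟩ with hg
  obtain ⟨i, j, hij, hEq⟩ := Finite.exists_ne_map_eq_of_infinite g
  have hEq' : gnd M (A i) = gnd M (A j) := congrArg Subtype.val hEq
  rcases lt_or_gt_of_ne hij with h | h
  · exact hns j i h (fun A' hA' => ⟨A', hEq' ▸ hA', subset_rfl⟩)
  · exact hns i j h (fun A' hA' => ⟨A', hEq' ▸ hA', subset_rfl⟩)

end NGCC
end

section
/- For every congruence class A, gnd(norm(A)) = gnd(A). -/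
namespace NGCC

variable {F : Type}

namespace Tm
variable {F : Type}

theorem indOn {P : Tm F → Prop} (hv : ∀ x, P (.var x))
    (ha : ∀ f ts, (∀ t ∈ ts, P t) → P (.app f ts)) : ∀ t, P t
  | .var x => hv x
  | .app f ts => ha f ts (fun t _ => indOn hv ha t)
  decreasing_by simp only [app.sizeOf_spec]; have h := List.sizeOf_lt_of_mem (by assumption : t ∈ ts); omega

@[simp] theorem subst_var (σ : Subst F) (x : ℕ) : (var x).subst σ = σ x := by
  simp [subst]

@[simp] theorem subst_app (σ : Subst F) (f : F) (ts : List (Tm F)) :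
    (app f ts).subst σ = app f (ts.map fun t => t.subst σ) := by
  rw [subst]; congr 1; simp [List.map_attach_eq_pmap]

@[simp] theorem varsList_var (x : ℕ) : (var x : Tm F).varsList = [x] := by simp [varsList]

@[simp] theorem varsList_app (f : F) (ts : List (Tm F)) :
    (app f ts).varsList = (ts.map varsList).flatten := by
  rw [varsList]; congr 1; simp [List.map_attach_eq_pmap]

theorem mem_varsList_subst {σ : Subst F} {x : ℕ} (t : Tm F) :
    x ∈ (t.subst σ).varsList ↔ ∃ y ∈ t.varsList, x ∈ (σ y).varsList := by
  induction t using indOn with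
  | hv y => simp
  | ha f ts ih =>
    simp only [subst_app, varsList_app, List.mem_flatten, List.mem_map]
    constructor
    · rintro ⟨l, ⟨u, ⟨s, hs, rfl⟩, rfl⟩, hx⟩
      rcases (ih s hs).1 hx with ⟨y, hy, hxy⟩
      exact ⟨y, ⟨_, ⟨s, hs, rfl⟩, hy⟩, hxy⟩
    · rintro ⟨y, ⟨_, ⟨s, hs, rfl⟩, hy⟩, hxy⟩
      exact ⟨_, ⟨_, ⟨s, hs, rfl⟩, rfl⟩, (ih s hs).2 ⟨y, hy, hxy⟩⟩

theorem subst_subst (t : Tm F) (σ δ : Subst F) :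
    (t.subst σ).subst δ = t.subst (Subst.comp σ δ) := by
  induction t using indOn with
  | hv y => simp [Subst.comp]
  | ha f ts ih => simp only [subst_app, List.map_map]; congr 1; exact List.map_congr_left fun s hs => ih s hs

theorem subst_congr {t : Tm F} {σ δ : Subst F} (h : ∀ x ∈ t.varsList, σ x = δ x) :
    t.subst σ = t.subst δ := by
  induction t using indOn with
  | hv y => simpa using h y (by simp)
  | ha f ts ih =>
    simp only [subst_app]; congr 1
    refine List.map_congr_left fun s hs => ih s hs fun x hx => h x ?_
    simp only [varsList_app, List.mem_flatten, List.mem_map]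
    exact ⟨_, ⟨s, hs, rfl⟩, hx⟩

theorem ground_iff {t : Tm F} : t.Ground ↔ ∀ x, x ∉ t.varsList := by
  unfold Ground; exact List.eq_nil_iff_forall_not_mem

theorem ground_subst {t : Tm F} {σ : Subst F} (h : ∀ x ∈ t.varsList, (σ x).Ground) :
    (t.subst σ).Ground := by
  rw [ground_iff]
  intro x hx
  rcases (mem_varsList_subst t).1 hx with ⟨y, hy, hxy⟩
  exact (ground_iff.1 (h y hy)) x hxy

theorem subst_id (t : Tm F) : t.subst Tm.var = t := by
  induction t using indOn with
  | hv y => simp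
  | ha f ts ih =>
    simp only [subst_app]
    congr 1
    exact List.map_congr_left ih |>.trans (List.map_id _)

theorem subst_ground {t : Tm F} (h : t.Ground) (σ : Subst F) : t.subst σ = t := by
  have : t.subst σ = t.subst Tm.var :=
    subst_congr (by rw [ground_iff] at h; intro x hx; exact absurd hx (h x))
  rw [this, subst_id]

end Tm
section Aux
variable {F : Type} {M : Set (Tm F)} {A : CClass F} {ρ σ : Subst F}

theorem ground_point {u : Tm F} {τ : Subst F} (h : (u.subst τ).Ground) {x : ℕ}
    (hx : x ∈ u.varsList) : (τ x).Ground := by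
  rw [Tm.ground_iff] at h ⊢
  intro y hy
  exact h y ((Tm.mem_varsList_subst u).2 ⟨x, hx, hy⟩)

theorem not_free_of_sep {x : ℕ} (hx : x ∈ sepVars A) : x ∉ freeVars A := by
  simp only [freeVars, Set.mem_diff, not_and, not_not]
  exact fun _ => hx

theorem sep_subset_varsAll (hne : A.Nonempty) : sepVars A ⊆ varsAll A := by
  obtain ⟨ct, hct⟩ := hne
  intro x hx
  have hxt : x ∈ (CTerm.term ct).varsIn := by
    simp only [sepVars, Set.mem_iInter] at hx; exact hx ct hct
  simp only [varsAll, Set.mem_iUnion]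
  exact ⟨ct, hct, Or.inl hxt⟩

theorem term_vars_subset (ct : CTerm F) (hct : ct ∈ A) :
    (CTerm.term ct).varsIn ⊆ varsAll A := by
  intro x hx
  simp only [varsAll, Set.mem_iUnion]
  exact ⟨ct, hct, Or.inl hx⟩

theorem constr_vars_subset (ct : CTerm F) (hct : ct ∈ A) {u : Tm F} (hu : u ∈ ct.constr) :
    u.varsIn ⊆ varsAll A := by
  intro x hx
  simp only [varsAll, Set.mem_iUnion]
  exact ⟨ct, hct, Or.inr (Set.mem_iUnion.2 ⟨u, Set.mem_iUnion.2 ⟨hu, hx⟩⟩)⟩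

theorem sigma_not_sep (hdom : Subst.dom σ = sepVars A) {x : ℕ} (hx : x ∉ sepVars A) :
    σ x = Tm.var x := by
  by_contra h
  exact hx (hdom ▸ (h : σ x ≠ Tm.var x))

theorem vars_subst_subset (hdom : Subst.dom σ = sepVars A)
    (hgr : ∀ x ∈ Subst.dom σ, (σ x).Ground) (u : Tm F) {x : ℕ}
    (hx : x ∈ (u.subst σ).varsList) : x ∈ u.varsList := by
  rcases (Tm.mem_varsList_subst u).1 hx with ⟨y, hy, hxy⟩
  by_cases hys : y ∈ sepVars A
  · have := hgr y (hdom ▸ hys)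
    rw [Tm.Ground] at this
    rw [this] at hxy
    simp at hxy
  · rw [sigma_not_sep hdom hys] at hxy
    simp only [Tm.varsList_var, List.mem_singleton] at hxy
    exact hxy ▸ hy

theorem sepVars_normC (hρ : IsNormRenaming A ρ) :
    sepVars (normC A ρ) = sepVars A := by
  ext x
  simp only [sepVars, Set.mem_iInter]
  constructor
  · intro h ct hct
    exact h ⟨ct.constr ∪ substConstr ct.constr ρ, ct.term⟩ (Or.inl ⟨ct, hct, rfl⟩)
  · intro h ct' hct'
    rcases hct' with ⟨ct, hct, rfl⟩ | ⟨ct, hct, _, rfl⟩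
    · exact h ct hct
    · have hxs : x ∈ sepVars A := by simp only [sepVars, Set.mem_iInter]; exact h
      have hρx : ρ x = Tm.var x := hρ.2.1 x (not_free_of_sep hxs)
      show x ∈ ((CTerm.term ct).subst ρ).varsIn
      have hxt : x ∈ (CTerm.term ct).varsList := h ct hct
      exact (Tm.mem_varsList_subst _).2 ⟨x, hxt, by rw [hρx]; simp⟩

theorem commute (hne : A.Nonempty) (hρ : IsNormRenaming A ρ)
    (hdom : Subst.dom σ = sepVars A) (hgr : ∀ x ∈ Subst.dom σ, (σ x).Ground)
    {t : Tm F} (ht : t.varsIn ⊆ varsAll A) :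
    (t.subst ρ).subst σ = (t.subst σ).subst ρ := by
  rw [Tm.subst_subst, Tm.subst_subst]
  apply Tm.subst_congr
  intro x hx
  show (ρ x).subst σ = (σ x).subst ρ
  by_cases hxs : x ∈ sepVars A
  · rw [hρ.2.1 x (not_free_of_sep hxs)]
    simp only [Tm.subst_var]
    exact (Tm.subst_ground (hgr x (hdom ▸ hxs)) ρ).symm
  · rw [sigma_not_sep hdom hxs]
    simp only [Tm.subst_var]
    by_cases hxf : x ∈ freeVars A
    · obtain ⟨y, hy⟩ := hρ.1 x
      rw [hy]
      simp only [Tm.subst_var]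
      have hyA : y ∉ varsAll A := hρ.2.2.2 x hxf y hy
      exact sigma_not_sep hdom (fun hs => hyA (sep_subset_varsAll hne hs))
    · rw [hρ.2.1 x hxf]
      simp only [Tm.subst_var]
      exact sigma_not_sep hdom hxs

/-- The set of ground terms obtained from a class as in `gnd`. -/
def GndSet (M : Set (Tm F)) (B : CClass F) : Set (Tm F) :=
  { t | ∃ σ : Subst F, GroundingForClass σ B ∧
      ∃ ct ∈ B, ConstrHolds M (CTerm.constr ct) σ ∧ t = (CTerm.term ct).subst σ }

/-- The classes appearing in `gnd'`. -/
def Bcl (M : Set (Tm F)) (A : CClass F) (σ : Subst F) : CClass F :=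
  { ct' | ∃ ct ∈ A, ConstrSat M (substConstr (CTerm.constr ct) σ) ∧ ct' = ct.subst σ }

theorem constrHolds_iff {Γ : Set (Tm F)} {τ : Subst F} :
    ConstrHolds M Γ τ ↔ ∀ u ∈ Γ, u.subst τ ∈ M := by
  simp [ConstrHolds, substConstr, Set.image_subset_iff, Set.subset_def]

theorem mem_GndSet_Bcl [Nonempty F] {C : CClass F} {t : Tm F} :
    t ∈ GndSet M (Bcl M C σ) ↔
      ∃ ct ∈ C, ∃ τ : Subst F, (∀ x, (τ x).Ground) ∧
        ConstrHolds M (substConstr (CTerm.constr ct) σ) τ ∧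
        t = ((CTerm.term ct).subst σ).subst τ := by
  constructor
  · classical
    rintro ⟨τ, hgc, ct', ⟨ct, hct, hsat, rfl⟩, hch, rfl⟩
    set c : Tm F := Tm.app (Classical.arbitrary F) [] with hc
    have hcg : c.Ground := by simp [Tm.Ground, hc]
    refine ⟨ct, hct, fun x => if (τ x).Ground then τ x else c, fun x => ?_, ?_, ?_⟩
    · dsimp only; split <;> [assumption; exact hcg]
    · obtain ⟨-, hgc2⟩ := hgc (ct.subst σ) ⟨ct, hct, hsat, rfl⟩
      rw [constrHolds_iff] at hch ⊢
      intro u hu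
      have hug : (u.subst τ).Ground := hgc2 u hu
      have : u.subst (fun x => if (τ x).Ground then τ x else c) = u.subst τ :=
        Tm.subst_congr fun x hx => by simp [ground_point hug hx]
      rw [this]
      exact hch u hu
    · obtain ⟨hgc1, -⟩ := hgc (ct.subst σ) ⟨ct, hct, hsat, rfl⟩
      have : ((CTerm.term ct).subst σ).subst (fun x => if (τ x).Ground then τ x else c)
          = ((CTerm.term ct).subst σ).subst τ :=
        Tm.subst_congr fun x hx => by simp [ground_point hgc1 hx]
      rw [this]
      rfl
  · rintro ⟨ct, hct, τ, hτg, hch, rfl⟩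
    refine ⟨τ, ?_, ct.subst σ, ⟨ct, hct, ⟨τ, hch⟩, rfl⟩, hch, rfl⟩
    rintro ct'' ⟨ct₂, hct₂, hsat₂, rfl⟩
    exact ⟨Tm.ground_subst fun x _ => hτg x, fun u _ => Tm.ground_subst fun x _ => hτg x⟩

end Aux
section Core
variable {F : Type} {M : Set (Tm F)} {A : CClass F} {ρ σ : Subst F}

theorem key [Nonempty F] (hne : A.Nonempty) (hρ : IsNormRenaming A ρ)
    (hdom : Subst.dom σ = sepVars A) (hgr : ∀ x ∈ Subst.dom σ, (σ x).Ground) :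
    GndSet M (Bcl M (normC A ρ) σ) = GndSet M (Bcl M A σ) := by
  classical
  ext t
  rw [mem_GndSet_Bcl, mem_GndSet_Bcl]
  constructor
  · rintro ⟨ct', hct', τ, hτg, hch, rfl⟩
    rcases hct' with ⟨ct, hct, rfl⟩ | ⟨ct, hct, -, rfl⟩
    · refine ⟨ct, hct, τ, hτg, ?_, rfl⟩
      rw [constrHolds_iff] at hch ⊢
      rintro u' ⟨u, hu, rfl⟩
      exact hch _ ⟨u, Or.inl hu, rfl⟩
    · -- renamed copy: term is ct.term.subst ρ
      refine ⟨ct, hct, Subst.comp ρ τ, fun x => ?_, ?_, ?_⟩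
      · simp only [Subst.comp]
        obtain ⟨y, hy⟩ := hρ.1 x
        rw [hy, Tm.subst_var]
        exact hτg y
      · rw [constrHolds_iff] at hch ⊢
        rintro u' ⟨u, hu, rfl⟩
        rw [← Tm.subst_subst (u.subst σ) ρ τ,
          ← commute hne hρ hdom hgr (constr_vars_subset ct hct hu)]
        exact hch _ ⟨u.subst ρ, Or.inr ⟨u, hu, rfl⟩, rfl⟩
      · show (((CTerm.term ct).subst ρ).subst σ).subst τ
            = Tm.subst (Subst.comp ρ τ) ((CTerm.term ct).subst σ)
        rw [← Tm.subst_subst ((CTerm.term ct).subst σ) ρ τ,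
          ← commute hne hρ hdom hgr (term_vars_subset ct hct)]
  · rintro ⟨ct, hct, τ, hτg, hch, rfl⟩
    set τ' : Subst F := fun x =>
      if h : ∃ z ∈ freeVars A, ρ z = Tm.var x then τ h.choose else τ x with hτ'
    have hτ'g : ∀ x, (τ' x).Ground := by
      intro x
      rw [hτ']
      dsimp only
      split <;> exact hτg _
    have K1 : ∀ x ∈ varsAll A, τ' x = τ x := by
      intro x hx
      rw [hτ']
      dsimp only
      split
      · next h =>
        exact absurd hx (hρ.2.2.2 _ h.choose_spec.1 x h.choose_spec.2)
      · rfl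
    have K2 : ∀ x ∈ freeVars A, ∀ y, ρ x = Tm.var y → τ' y = τ x := by
      intro x hxf y hy
      have h : ∃ z ∈ freeVars A, ρ z = Tm.var y := ⟨x, hxf, hy⟩
      rw [hτ']
      dsimp only
      rw [dif_pos h]
      congr 1
      exact hρ.2.2.1 _ h.choose_spec.1 x hxf (h.choose_spec.2.trans hy.symm)
    have ha : ∀ u : Tm F, u.varsIn ⊆ varsAll A →
        (u.subst σ).subst τ' = (u.subst σ).subst τ := by
      intro u hu
      exact Tm.subst_congr fun x hx => K1 x (hu (vars_subst_subset hdom hgr u hx))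
    have hb : ∀ u : Tm F, u.varsIn ⊆ varsAll A →
        ((u.subst ρ).subst σ).subst τ' = (u.subst σ).subst τ := by
      intro u hu
      rw [commute hne hρ hdom hgr hu, Tm.subst_subst (u.subst σ) ρ τ']
      apply Tm.subst_congr
      intro x hx
      have hxA : x ∈ varsAll A := hu (vars_subst_subset hdom hgr u hx)
      show (ρ x).subst τ' = τ x
      by_cases hxf : x ∈ freeVars A
      · obtain ⟨y, hy⟩ := hρ.1 x
        rw [hy, Tm.subst_var]
        exact K2 x hxf y hy
      · rw [hρ.2.1 x hxf, Tm.subst_var]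
        exact K1 x hxA
    refine ⟨⟨CTerm.constr ct ∪ substConstr (CTerm.constr ct) ρ, CTerm.term ct⟩,
      Or.inl ⟨ct, hct, rfl⟩, τ', hτ'g, ?_, ?_⟩
    · rw [constrHolds_iff] at hch ⊢
      rintro u' ⟨u, (hu | ⟨u₀, hu₀, rfl⟩), rfl⟩
      · rw [ha u (constr_vars_subset ct hct hu)]
        exact hch _ ⟨u, hu, rfl⟩
      · rw [hb u₀ (constr_vars_subset ct hct hu₀)]
        exact hch _ ⟨u₀, hu₀, rfl⟩
    · exact (ha _ (term_vars_subset ct hct)).symm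

end Core


/-- For every congruence class `A`, `gnd(norm(A)) = gnd(A)`. -/
theorem gnd_norm_eq_gnd {F : Type} [Finite F] [Nonempty F]
    (M : Set (Tm F)) (hMfin : M.Finite) (hMg : ∀ t ∈ M, t.Ground)
    (A : CClass F) (hAfin : A.Finite) (ρ : Subst F) (hρ : IsNormRenaming A ρ) :
    gnd M (normC A ρ) = gnd M A := by
  rcases A.eq_empty_or_nonempty with rfl | hne
  · have h : normC (∅ : CClass F) ρ = ∅ := by
      simp [normC]
    rw [h]
  · ext S
    simp only [gnd, gnd', Set.mem_setOf_eq]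
    constructor
    · rintro ⟨B, ⟨σ, hdom, hgr, rfl⟩, rfl⟩
      rw [sepVars_normC hρ] at hdom
      refine ⟨Bcl M A σ, ⟨σ, hdom, hgr, rfl⟩, ?_⟩
      exact (key hne hρ hdom hgr :
        GndSet M (Bcl M (normC A ρ) σ) = GndSet M (Bcl M A σ))
    · rintro ⟨B, ⟨σ, hdom, hgr, rfl⟩, rfl⟩
      refine ⟨Bcl M (normC A ρ) σ, ⟨σ, by rw [sepVars_normC hρ]; exact hdom, hgr, rfl⟩, ?_⟩
      exact (key hne hρ hdom hgr :
        GndSet M (Bcl M (normC A ρ) σ) = GndSet M (Bcl M A σ)).symm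

end NGCC
end

section
/- Let Π be a set of congruence classes and assume M is Π-closed for a ground term α with α ∈ M. Let A ∈ Π be a class all of whose constrained terms carry the same constraint, with separating variables X and free variables Y, and assume gnd_M(E) ⊨ sσ ≈ tσ for all substitutions σ grounding for A and all {sσ, tσ} ⊆ Aσ. Then for every Γ ∥ s ∈ A, every substitution σ : X → T(Ω,∅), every substitution δ : Y → T(Ω,∅) such that Γσδ is satisfiable, and δ' = {y ↦ α | y ∈ Y}, it holds that gnd_M(E) ⊨ sσδ ≈ sσδ'. -/
namespace NGCC

variable {F : Type}

section GTHelpers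
variable {F : Type}

theorem Tm.myind {motive : Tm F → Prop}
    (hv : ∀ x, motive (Tm.var x))
    (ha : ∀ f ts, (∀ t ∈ ts, motive t) → motive (Tm.app f ts)) :
    ∀ t, motive t
  | Tm.var x => hv x
  | Tm.app f ts => ha f ts (fun t ht => Tm.myind hv ha t)
  decreasing_by simp only [Tm.app.sizeOf_spec]; have h := List.sizeOf_lt_of_mem ht; omega

theorem Tm.subst_app_eq (σ : Subst F) (f : F) (ts : List (Tm F)) :
    (Tm.app f ts).subst σ = Tm.app f (ts.map (fun t => t.subst σ)) := by
  rw [Tm.subst]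
  congr 1
  exact List.attach_map_val (l := ts) (f := fun t => t.subst σ)

theorem Tm.varsList_app_eq (f : F) (ts : List (Tm F)) :
    (Tm.app f ts).varsList = (ts.map Tm.varsList).flatten := by
  rw [Tm.varsList]
  congr 1
  exact List.attach_map_val (l := ts) (f := Tm.varsList)

theorem Tm.subst_subst_s4 (σ δ : Subst F) (t : Tm F) :
    (t.subst σ).subst δ = t.subst (fun x => (σ x).subst δ) := by
  induction t using Tm.myind with
  | hv x => simp [Tm.subst]
  | ha f ts ih =>
    simp only [Tm.subst_app_eq, List.map_map]
    congr 1
    apply List.map_congr_left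
    intro t ht
    exact ih t ht

theorem Tm.subst_congr_s4 {σ δ : Subst F} {t : Tm F}
    (h : ∀ x ∈ t.varsList, σ x = δ x) : t.subst σ = t.subst δ := by
  induction t using Tm.myind with
  | hv x => simpa [Tm.subst, Tm.varsList] using h x (by simp [Tm.varsList])
  | ha f ts ih =>
    simp only [Tm.subst_app_eq]
    congr 1
    apply List.map_congr_left
    intro t ht
    apply ih t ht
    intro x hx
    apply h
    rw [Tm.varsList_app_eq]
    simp only [List.mem_flatten, List.mem_map]
    exact ⟨t.varsList, ⟨t, ht, rfl⟩, hx⟩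

theorem Tm.subst_id_s4 (t : Tm F) : t.subst Tm.var = t := by
  induction t using Tm.myind with
  | hv x => simp [Tm.subst]
  | ha f ts ih =>
    rw [Tm.subst_app_eq]
    congr 1
    conv_rhs => rw [← List.map_id ts]
    exact List.map_congr_left ih

theorem Tm.mem_varsList_subst_s4 {σ : Subst F} {t : Tm F} {y : ℕ} :
    y ∈ (t.subst σ).varsList ↔ ∃ x ∈ t.varsList, y ∈ (σ x).varsList := by
  induction t using Tm.myind with
  | hv x => simp [Tm.subst, Tm.varsList]
  | ha f ts ih =>
    rw [Tm.subst_app_eq, Tm.varsList_app_eq, Tm.varsList_app_eq]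
    simp only [List.map_map, List.mem_flatten, List.mem_map]
    constructor
    · rintro ⟨l, ⟨t, ht, rfl⟩, hy⟩
      obtain ⟨x, hx, hyx⟩ := (ih t ht).1 hy
      exact ⟨x, ⟨t.varsList, ⟨t, ht, rfl⟩, hx⟩, hyx⟩
    · rintro ⟨x, ⟨l, ⟨t, ht, rfl⟩, hx⟩, hyx⟩
      exact ⟨_, ⟨t, ht, rfl⟩, (ih t ht).2 ⟨x, hx, hyx⟩⟩

theorem Tm.ground_iff_s4 {t : Tm F} : t.Ground ↔ ∀ x, x ∉ t.varsList := by
  unfold Tm.Ground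
  exact List.eq_nil_iff_forall_not_mem

theorem Tm.ground_subst_of {σ : Subst F} {t : Tm F}
    (h : ∀ x ∈ t.varsList, (σ x).Ground) : (t.subst σ).Ground := by
  rw [Tm.ground_iff_s4]
  intro y hy
  obtain ⟨x, hx, hyx⟩ := Tm.mem_varsList_subst_s4.1 hy
  rw [(h x hx)] at hyx
  exact (List.not_mem_nil (a := y)) hyx

theorem Tm.subst_ground_s4 {σ : Subst F} {t : Tm F} (h : t.Ground) : t.subst σ = t := by
  have := Tm.subst_congr_s4 (t := t) (σ := σ) (δ := Tm.var) (by
    intro x hx; rw [Tm.ground_iff_s4] at h; exact absurd hx (h x))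
  rw [this, Tm.subst_id_s4]

theorem Entails.rfl {Eqs : Set (Tm F × Tm F)} {s : Tm F} : Entails Eqs s s :=
  fun _ _ _ _ _ => Eq.refl _

theorem Entails.trans {Eqs : Set (Tm F × Tm F)} {s t u : Tm F}
    (h1 : Entails Eqs s t) (h2 : Entails Eqs t u) : Entails Eqs s u :=
  fun a na I v hE => (h1 a na I v hE).trans (h2 a na I v hE)

theorem Entails.symm {Eqs : Set (Tm F × Tm F)} {s t : Tm F}
    (h : Entails Eqs s t) : Entails Eqs t s :=
  fun a na I v hE => (h a na I v hE).symm

end GTHelpers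
/-- Lemma: Ground Testing. -/
theorem ground_testing {F : Type} [Finite F] [Nonempty F]
    (M : Set (Tm F)) (hMfin : M.Finite) (hMg : ∀ t ∈ M, t.Ground)
    (E : Set (Tm F × Tm F)) (hEfin : E.Finite)
    (P : Set (CClass F)) (α : Tm F) (hαM : α ∈ M) (hcl : PiClosed M P α)
    (A : CClass F) (hAP : A ∈ P) (hAfin : A.Finite)
    (Γ₀ : Set (Tm F)) (hconstr : ∀ ct ∈ A, CTerm.constr ct = Γ₀)
    (hmod : ∀ σ : Subst F, GroundingForClass σ A →
        ∀ s ∈ applyClass M A σ, ∀ t ∈ applyClass M A σ, Entails (gndM M E) s t) :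
    ∀ ct ∈ A, ∀ σ δ δ' : Subst F,
      Subst.dom σ ⊆ sepVars A → (∀ x ∈ sepVars A, (σ x).Ground) →
      Subst.dom δ ⊆ freeVars A → (∀ x ∈ freeVars A, (δ x).Ground) →
      (∀ y ∈ freeVars A, δ' y = α) → (∀ y, y ∉ freeVars A → δ' y = Tm.var y) →
      ConstrSat M (substConstr (substConstr (CTerm.constr ct) σ) δ) →
      Entails (gndM M E) (((CTerm.term ct).subst σ).subst δ)
        (((CTerm.term ct).subst σ).subst δ') := by
  classical
  intro ct hct σ δ δ' hdomσ hσg hdomδ hδg hδ'1 hδ'2 hsat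
  -- basic facts
  have hfree_not_sep : ∀ x ∈ freeVars A, x ∉ sepVars A := fun x hx => hx.2
  have hσfree : ∀ x ∈ freeVars A, σ x = Tm.var x := by
    intro x hx
    by_contra h
    exact hfree_not_sep x hx (hdomσ h)
  have hvar_cases : ∀ ct' ∈ A, ∀ x ∈ (CTerm.term ct').varsList,
      x ∈ sepVars A ∨ x ∈ freeVars A := by
    intro ct' hct' x hx
    have hterm : x ∈ termVars A := Set.mem_biUnion hct' hx
    by_cases hsep : x ∈ sepVars A
    · exact Or.inl hsep
    · exact Or.inr ⟨hterm, hsep⟩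
  -- the "good" groundings
  set Good : Subst F → Prop := fun μ =>
    (∀ x ∈ sepVars A, μ x = σ x) ∧ (∀ x ∈ freeVars A, (μ x).Ground) ∧
    (∀ u ∈ Γ₀, u.subst μ ∈ M) with hGoodDef
  have hground : ∀ μ, Good μ → GroundingForClass μ A := by
    rintro μ ⟨g1, g2, g3⟩ ct' hct'
    constructor
    · apply Tm.ground_subst_of
      intro x hx
      rcases hvar_cases ct' hct' x hx with h | h
      · rw [g1 x h]; exact hσg x h
      · exact g2 x h
    · intro u hu
      rw [hconstr ct' hct'] at hu
      exact hMg _ (g3 u hu)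
  have hmem : ∀ μ, Good μ → ∀ ct' ∈ A,
      (CTerm.term ct').subst μ ∈ applyClass M A μ := by
    rintro μ ⟨g1, g2, g3⟩ ct' hct'
    refine ⟨ct', hct', ?_, rfl⟩
    rintro _ ⟨u, hu, rfl⟩
    rw [hconstr ct' hct'] at hu
    exact g3 u hu
  have hpair : ∀ μ, Good μ → ∀ ct₁ ∈ A, ∀ ct₂ ∈ A,
      Entails (gndM M E) ((CTerm.term ct₁).subst μ) ((CTerm.term ct₂).subst μ) := by
    intro μ hμ ct₁ h1 ct₂ h2
    exact hmod μ (hground μ hμ) _ (hmem μ hμ ct₁ h1) _ (hmem μ hμ ct₂ h2)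
  -- replacing a single free variable by α
  have step : ∀ μ, Good μ → ∀ y ∈ freeVars A,
      Good (fun x => if x = y then α else μ x) ∧
      Entails (gndM M E) ((CTerm.term ct).subst μ)
        ((CTerm.term ct).subst (fun x => if x = y then α else μ x)) := by
    rintro μ ⟨g1, g2, g3⟩ y hy
    have hgood' : Good (fun x => if x = y then α else μ x) := by
      refine ⟨?_, ?_, ?_⟩
      · intro x hx
        have : x ≠ y := fun h => hfree_not_sep y hy (h ▸ hx)
        simp only [this, if_false]
        exact g1 x hx
      · intro x hx
        by_cases hxy : x = y
        · simp only [hxy, if_true]; exact hMg α hαM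
        · simp only [hxy, if_false]; exact g2 x hx
      · intro u hu
        have occ : OccursIn u P := by
          refine ⟨A, hAP, ct, hct, Or.inr ⟨u, ?_, Subterm.refl u⟩⟩
          rw [hconstr ct hct]; exact hu
        refine hcl u occ μ (g3 u hu) _ ?_
        intro x hne
        by_cases hxy : x = y
        · simp [hxy]
        · simp only [hxy, if_false] at hne; exact absurd rfl hne
    refine ⟨hgood', ?_⟩
    -- find a term of A avoiding y
    have hy_not_sep : y ∉ sepVars A := hfree_not_sep y hy
    rw [sepVars, Set.mem_iInter₂] at hy_not_sep
    push_neg at hy_not_sep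
    obtain ⟨ct₂, hct₂, hyct₂⟩ := hy_not_sep
    have heq : (CTerm.term ct₂).subst μ
        = (CTerm.term ct₂).subst (fun x => if x = y then α else μ x) := by
      apply Tm.subst_congr_s4
      intro x hx
      have hxy : x ≠ y := fun h => hyct₂ (h ▸ hx)
      simp [hxy]
    refine (hpair μ ⟨g1, g2, g3⟩ ct hct ct₂ hct₂).trans ?_
    rw [heq]
    exact hpair _ hgood' ct₂ hct₂ ct hct
  -- replacing a list of free variables by α
  have main : ∀ L : List ℕ, (∀ y ∈ L, y ∈ freeVars A) → ∀ μ, Good μ →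
      Good (fun x => if x ∈ L then α else μ x) ∧
      Entails (gndM M E) ((CTerm.term ct).subst μ)
        ((CTerm.term ct).subst (fun x => if x ∈ L then α else μ x)) := by
    intro L
    induction L with
    | nil =>
      intro _ μ hμ
      have : (fun x => if x ∈ ([] : List ℕ) then α else μ x) = μ := by
        funext x; simp
      rw [this]
      exact ⟨hμ, Entails.rfl⟩
    | cons y L ih =>
      intro hL μ hμ
      obtain ⟨hgood1, hent1⟩ := step μ hμ y (hL y (List.mem_cons_self (a := y) (l := L)))
      obtain ⟨hgood2, hent2⟩ :=
        ih (fun z hz => hL z (List.mem_cons_of_mem y hz)) _ hgood1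
      have hfun : (fun x => if x ∈ L then α else if x = y then α else μ x)
          = (fun x => if x ∈ y :: L then α else μ x) := by
        funext x
        by_cases hxL : x ∈ L
        · simp [hxL]
        · by_cases hxy : x = y
          · simp [hxL, hxy]
          · simp [hxL, hxy]
      rw [hfun] at hgood2 hent2
      exact ⟨hgood2, hent1.trans hent2⟩
  -- the initial grounding substitution
  obtain ⟨θ, hθ⟩ := hsat
  set μ₀ : Subst F := fun x => ((σ x).subst δ).subst θ with hμ₀def
  have hθ' : ∀ u ∈ Γ₀, ((u.subst σ).subst δ).subst θ ∈ M := by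
    intro u hu
    apply hθ
    have hu' : u ∈ CTerm.constr ct := by rw [hconstr ct hct]; exact hu
    exact ⟨_, ⟨_, ⟨u, hu', rfl⟩, rfl⟩, rfl⟩
  have hsubst3 : ∀ t : Tm F, ((t.subst σ).subst δ).subst θ = t.subst μ₀ := by
    intro t
    rw [Tm.subst_subst_s4, Tm.subst_subst_s4]
    apply Tm.subst_congr_s4
    intro x _
    rw [← Tm.subst_subst_s4]
  have hgood₀ : Good μ₀ := by
    refine ⟨?_, ?_, ?_⟩
    · intro x hx
      simp only [hμ₀def]
      rw [Tm.subst_ground_s4 (hσg x hx), Tm.subst_ground_s4 (hσg x hx)]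
    · intro x hx
      simp only [hμ₀def]
      rw [hσfree x hx]
      have : (Tm.var x).subst δ = δ x := by rw [Tm.subst]
      rw [this, Tm.subst_ground_s4 (hδg x hx)]
      exact hδg x hx
    · intro u hu
      rw [← hsubst3]
      exact hθ' u hu
  -- σδ composite and its groundness on the term
  have hsd_ground : (((CTerm.term ct).subst σ).subst δ).Ground := by
    rw [Tm.subst_subst_s4]
    apply Tm.ground_subst_of
    intro x hx
    rcases hvar_cases ct hct x hx with h | h
    · rw [Tm.subst_ground_s4 (hσg x h)]; exact hσg x h
    · rw [hσfree x h]
      have : (Tm.var x).subst δ = δ x := by rw [Tm.subst]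
      rw [this]; exact hδg x h
  have hμ₀eq : (CTerm.term ct).subst μ₀ = ((CTerm.term ct).subst σ).subst δ := by
    rw [← hsubst3, Tm.subst_ground_s4 hsd_ground]
  -- the final list of free variables of the term
  set L : List ℕ := (CTerm.term ct).varsList.filter (fun x => decide (x ∈ freeVars A))
    with hLdef
  have hLsub : ∀ y ∈ L, y ∈ freeVars A := by
    intro y hy
    rw [hLdef, List.mem_filter] at hy
    exact of_decide_eq_true hy.2
  obtain ⟨hgoodL, hentL⟩ := main L hLsub μ₀ hgood₀
  have hfinal : (CTerm.term ct).subst (fun x => if x ∈ L then α else μ₀ x)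
      = ((CTerm.term ct).subst σ).subst δ' := by
    rw [Tm.subst_subst_s4]
    apply Tm.subst_congr_s4
    intro x hx
    by_cases hfree : x ∈ freeVars A
    · have hxL : x ∈ L := by
        rw [hLdef, List.mem_filter]
        exact ⟨hx, decide_eq_true hfree⟩
      simp only [hxL, if_true]
      rw [hσfree x hfree]
      have : (Tm.var x).subst δ' = δ' x := by rw [Tm.subst]
      rw [this, hδ'1 x hfree]
    · have hxL : x ∉ L := by
        intro h
        exact hfree (hLsub x h)
      simp only [hxL, if_false]
      rcases hvar_cases ct hct x hx with h | h
      · rw [hgood₀.1 x h, Tm.subst_ground_s4 (hσg x h)]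
      · exact absurd h hfree
  rw [← hμ₀eq, ← hfinal]
  exact hentL

end NGCC
end

section
/- Termination of CC(𝒳): every run of ⇒_CC(𝒳) starting from the initial state Π₀ for E and M is finite, i.e. reaches a state where none of the rules Merge, Deduction, Subsumption is applicable. -/
namespace NGCC

variable {F : Type}

/-! ### Auxiliary lemmas for termination -/

lemma MConstrained.substClass' {A : CClass F} (h : MConstrained A) (σ : Subst F) :
    MConstrained (substClass A σ) := by
  rintro ct' ⟨ct, hct, rfl⟩
  exact ⟨ct.term, h ct hct, rfl⟩

lemma MConstrained.addConstr' {A : CClass F} (h : MConstrained A) (Γ : Set (Tm F)) :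
    MConstrained (addConstr A Γ) := by
  rintro ct' ⟨ct, hct, rfl⟩
  exact Or.inl (h ct hct)

lemma MConstrained.union' {A B : CClass F} (hA : MConstrained A) (hB : MConstrained B) :
    MConstrained (A ∪ B) := by
  rintro ct (h | h)
  exacts [hA ct h, hB ct h]

lemma MConstrained.normC' {A : CClass F} (h : MConstrained A) (ρ : Subst F) :
    MConstrained (normC A ρ) := by
  rintro ct' (⟨ct, hct, rfl⟩ | ⟨ct, hct, _, rfl⟩)
  · exact Or.inl (h ct hct)
  · exact Or.inr ⟨ct.term, h ct hct, rfl⟩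

/-- If `A` is `M`-constrained, every element of `gnd M A` is a subset of `M`. -/
lemma gnd_subset_M {M : Set (Tm F)} {A : CClass F} (hA : MConstrained A) :
    ∀ S ∈ gnd M A, S ⊆ M := by
  rintro S ⟨B, ⟨σ0, _, _, rfl⟩, rfl⟩ t ⟨σ, _, ct, hctB, hch, rfl⟩
  obtain ⟨ct0, hct0, _, rfl⟩ := hctB
  exact hch ⟨ct0.term.subst σ0, ⟨ct0.term, hA ct0 hct0, rfl⟩, rfl⟩

/-- Case analysis of a step: either a new `M`-constrained, unsubsumed class is
inserted, or a subsumed class is removed. -/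
lemma step_cases {M : Set (Tm F)} {P Q : Set (CClass F)} (h : Step M P Q)
    (hPc : ∀ C ∈ P, MConstrained C) :
    (∃ C', Q = insert C' P ∧ MConstrained C' ∧ ∀ C ∈ P, ¬ Subsumes M C C') ∨
    (∃ A B, A ∈ P ∧ B ∈ P ∧ A ≠ B ∧ Subsumes M B A ∧ Q = P \ {A}) := by
  cases h with
  | merge A B C' ρA ρB μ ct₁ ct₂ hA hB hρA hρB h1 h2 hmgu hC' hnsub =>
    refine Or.inl ⟨C', rfl, ?_, hnsub⟩
    rw [hC']
    exact ((((hPc A hA).normC' ρA).addConstr' _).union'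
      (((hPc B hB).normC' ρB).addConstr' _)).substClass' μ
  | deduction A B C' f ss ts ss' ts' Γ Δ Γs Δs μ hA hB h1 h2 hl1 hl2 hl3 hl4 hl5
      hside hmgu hC' hnsub =>
    refine Or.inl ⟨C', rfl, ?_, hnsub⟩
    rw [hC']
    rintro ct' ⟨ct, hct, rfl⟩
    simp only [Set.mem_insert_iff, Set.mem_singleton_iff] at hct
    rcases hct with rfl | rfl
    · show (Tm.app f ss').subst μ ∈ substConstr (Γ ∪ Δ ∪ _ ∪ _) μ
      rw [hmgu.1]
      exact ⟨Tm.app f ss, Or.inl (Or.inl (Or.inl (hPc A hA _ h1))), rfl⟩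
    · show (Tm.app f ts').subst μ ∈ substConstr (Γ ∪ Δ ∪ _ ∪ _) μ
      rw [hmgu.2.1]
      exact ⟨Tm.app f ts, Or.inl (Or.inl (Or.inr (hPc B hB _ h2))), rfl⟩
  | subsump A B hA hB hne hsub =>
    exact Or.inr ⟨A, B, hA, hB, hne, hsub, rfl⟩

/-- Termination of CC(X): there is no infinite run of the
calculus starting from the initial state. -/
theorem ccx_terminating {F : Type} [Fintype F] [Nonempty F] (ar : F → ℕ)
    (M : Set (Tm F)) (hMfin : M.Finite) (hMg : ∀ t ∈ M, t.Ground)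
    (E : Set (Tm F × Tm F)) (hEfin : E.Finite)
    (hEg : ∀ p ∈ E, ∃ σ : Subst F, Tm.subst σ p.1 ∈ M ∧ Tm.subst σ p.2 ∈ M) :
    ¬ ∃ π : ℕ → Set (CClass F),
        π 0 = initState ar E ∧ ∀ n, Step M (π n) (π (n + 1)) := by
  rintro ⟨π, h0, hstep⟩
  -- ambient finite set of possible `gnd`-values
  have hAmb : {X : Set (Set (Tm F)) | ∀ S ∈ X, S ⊆ M}.Finite :=
    hMfin.finite_subsets.finite_subsets.subset (fun X hX S hS => hX S hS)
  -- invariant: every state is finite and all its classes are M-constrained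
  have hinv : ∀ n, (π n).Finite ∧ ∀ C ∈ π n, MConstrained C := by
    intro n
    induction n with
    | zero =>
      rw [h0]
      constructor
      · apply Set.Finite.subset
          ((hEfin.image (fun p : Tm F × Tm F =>
            ({⟨{p.1, p.2}, p.1⟩, ⟨{p.1, p.2}, p.2⟩} : CClass F))).union
            (Set.finite_range (fun f => singleTermClass ar f)))
        rintro A (⟨p, hp, rfl⟩ | ⟨f, rfl⟩)
        · exact Or.inl ⟨p, hp, rfl⟩
        · exact Or.inr ⟨f, rfl⟩
      · rintro A (⟨p, hp, rfl⟩ | ⟨f, rfl⟩)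
        · rintro ct hct
          simp only [Set.mem_insert_iff, Set.mem_singleton_iff] at hct
          rcases hct with rfl | rfl
          · exact Set.mem_insert _ _
          · exact Set.mem_insert_iff.mpr (Or.inr rfl)
        · rintro ct hct
          simp only [singleTermClass, Set.mem_singleton_iff] at hct
          subst hct
          exact rfl
    | succ n ih =>
      rcases step_cases (hstep n) ih.2 with ⟨C', hQ, hC'm, _⟩ | ⟨A, B, hA, _, _, _, hQ⟩
      · rw [hQ]
        exact ⟨ih.1.insert C', by rintro C (rfl | hC); exacts [hC'm, ih.2 C hC]⟩
      · rw [hQ]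
        exact ⟨ih.1.diff, fun C hC => ih.2 C hC.1⟩
  -- the set of gnd-values subsumed by some class of the current state
  set Dn : ℕ → Set (Set (Set (Tm F))) := fun n =>
    {X | (∀ S ∈ X, S ⊆ M) ∧ ∃ C ∈ π n, ∀ A' ∈ X, ∃ B' ∈ gnd M C, A' ⊆ B'} with hDndef
  have hDfin : ∀ n, (Dn n).Finite := fun n => hAmb.subset (fun X hX => hX.1)
  set K := {X : Set (Set (Tm F)) | ∀ S ∈ X, S ⊆ M}.ncard with hKdef
  have hcK : ∀ n, (Dn n).ncard ≤ K := fun n =>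
    Set.ncard_le_ncard (fun X hX => hX.1) hAmb
  -- the measure strictly decreases at every step
  have hdec : ∀ n, (K - (Dn (n + 1)).ncard) * 2 + (π (n + 1)).ncard
      < (K - (Dn n).ncard) * 2 + (π n).ncard := by
    intro n
    rcases step_cases (hstep n) (hinv n).2 with
      ⟨C', hQ, hC'm, hnsub⟩ | ⟨A, B, hA, hB, hne, hsub, hQ⟩
    · have hsubD : Dn n ⊆ Dn (n + 1) := by
        rintro X ⟨hb, C, hC, hle⟩
        exact ⟨hb, C, by rw [hQ]; exact Set.mem_insert_of_mem _ hC, hle⟩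
      have hmem : gnd M C' ∈ Dn (n + 1) :=
        ⟨gnd_subset_M hC'm, C', by rw [hQ]; exact Set.mem_insert _ _,
          fun A' hA' => ⟨A', hA', subset_rfl⟩⟩
      have hnot : gnd M C' ∉ Dn n := by
        rintro ⟨_, C, hC, hle⟩
        exact hnsub C hC hle
      have h1 : (Dn n).ncard < (Dn (n + 1)).ncard :=
        Set.ncard_lt_ncard
          (hsubD.ssubset_of_ne (by intro h; rw [h] at hnot; exact hnot hmem))
          (hDfin (n + 1))
      have h2 : (π (n + 1)).ncard ≤ (π n).ncard + 1 := by
        rw [hQ]; exact Set.ncard_insert_le _ _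
      have h3 := hcK (n + 1)
      omega
    · have hEq : Dn (n + 1) = Dn n := by
        ext X
        constructor
        · rintro ⟨hb, C, hC, hle⟩
          rw [hQ] at hC
          exact ⟨hb, C, hC.1, hle⟩
        · rintro ⟨hb, C, hC, hle⟩
          by_cases hCA : C = A
          · subst hCA
            refine ⟨hb, B, by rw [hQ]; exact ⟨hB, fun h => hne h.symm⟩, fun A' hA' => ?_⟩
            obtain ⟨B', hB', hs1⟩ := hle A' hA'
            obtain ⟨B'', hB'', hs2⟩ := hsub B' hB'
            exact ⟨B'', hB'', hs1.trans hs2⟩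
          · exact ⟨hb, C, by rw [hQ]; exact ⟨hC, hCA⟩, hle⟩
      have h2 : (π (n + 1)).ncard < (π n).ncard := by
        rw [hQ]
        exact Set.ncard_diff_singleton_lt_of_mem hA (hinv n).1
      rw [hEq]
      omega
  -- a strictly decreasing sequence of naturals is impossible
  set m : ℕ → ℕ := fun n => (K - (Dn n).ncard) * 2 + (π n).ncard with hmdef
  have hbd : ∀ n, m n + n ≤ m 0 := by
    intro n
    induction n with
    | zero => omega
    | succ n ih => have := hdec n; simp only [hmdef] at ih ⊢; omega
  have := hbd (m 0 + 1)
  omega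

end NGCC
end

section
/- Deduction with single-term classes: assume a state Π such that Deduction is applicable for some classes A, B ∈ Π with Γ ∥ f(s₁,…,sₙ) ∈ A and Δ ∥ f(t₁,…,tₙ) ∈ B, with resulting simultaneous most general unifier μ and side premises Γᵢ ∥ s'ᵢ, Δᵢ ∥ t'ᵢ ∈ norm(Dᵢ) for 1 ≤ i ≤ n producing the new class {Γ' ∥ f(s'₁,…,s'ₙ), Γ' ∥ f(t'₁,…,t'ₙ)}μ. Then Deduction is also applicable taking for A and B two variable-disjoint copies of the single-term class {f(x₁,…,xₙ) ∈ M ∥ f(x₁,…,xₙ)}, with simultaneous most general unifier μ' = {x₁ ↦ s'₁, …, xₙ ↦ s'ₙ, y₁ ↦ t'₁, …, yₙ ↦ t'ₙ} and resulting class {Γ'' ∥ f(s'₁,…,s'ₙ), f(t'₁,…,t'ₙ)}μ' where Γ'' = f(x₁,…,xₙ)∈M ∧ f(y₁,…,yₙ)∈M ∧ Γ₁ ∧ … ∧ Γₙ ∧ Δ₁ ∧ … ∧ Δₙ. -/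
namespace NGCC

variable {F : Type}

section Aux

lemma Tm.subst_app_s9 (σ : Subst F) (f : F) (ts : List (Tm F)) :
    (Tm.app f ts).subst σ = Tm.app f (ts.map (·.subst σ)) := by
  rw [Tm.subst]; simp

lemma Tm.subst_var_s9 (σ : Subst F) (x : ℕ) : (Tm.var x : Tm F).subst σ = σ x := by
  rw [Tm.subst]

lemma Tm.mem_varsList_app {x : ℕ} {f : F} {ts : List (Tm F)} :
    x ∈ (Tm.app f ts).varsList ↔ ∃ t ∈ ts, x ∈ t.varsList := by
  rw [Tm.varsList]; simp

lemma Tm.subst_eq_self (σ : Subst F) :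
    ∀ t : Tm F, (∀ x ∈ t.varsList, σ x = Tm.var x) → t.subst σ = t
  | Tm.var x, h => by
      rw [Tm.subst_var_s9]; exact h x (by rw [Tm.varsList]; simp)
  | Tm.app f ts, h => by
      rw [Tm.subst_app_s9]
      congr 1
      have : ts.map (fun t => t.subst σ) = ts.map id :=
        List.map_congr_left fun a ha =>
          Tm.subst_eq_self σ a (fun x hx => h x (Tm.mem_varsList_app.2 ⟨a, ha, hx⟩))
      simpa using this
  termination_by t => sizeOf t
  decreasing_by simp only [Tm.app.sizeOf_spec]; have := List.sizeOf_lt_of_mem ha; omega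

end Aux

/-- Deduction with Single Term Classes. -/
theorem deduction_single_term_classes {F : Type} [Fintype F] [Nonempty F]
    (M : Set (Tm F)) (P : Set (CClass F)) (A B : CClass F)
    (hA : A ∈ P) (hB : B ∈ P) (f : F)
    (ss ts ss' ts' : List (Tm F)) (Γ Δ : Set (Tm F)) (Γs Δs : List (Set (Tm F)))
    (μ : Subst F)
    (h1 : (⟨Γ, Tm.app f ss⟩ : CTerm F) ∈ A)
    (h2 : (⟨Δ, Tm.app f ts⟩ : CTerm F) ∈ B)
    (hl1 : ss'.length = ss.length) (hl2 : ts'.length = ss.length)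
    (hl3 : ts.length = ss.length) (hl4 : Γs.length = ss.length) (hl5 : Δs.length = ss.length)
    (hside : ∀ i < ss.length, ∃ D ∈ P, ∃ ρ : Subst F, IsNormRenaming D ρ ∧
        (⟨Γs[i]!, ss'[i]!⟩ : CTerm F) ∈ normC D ρ ∧ (⟨Δs[i]!, ts'[i]!⟩ : CTerm F) ∈ normC D ρ)
    (hmgu : IsSimMGU μ (Tm.app f ss') (Tm.app f ss) (Tm.app f ts') (Tm.app f ts))
    -- two variable-disjoint copies of the single-term class, with fresh variables
    (xs ys : List ℕ) (hx : xs.length = ss.length) (hy : ys.length = ss.length)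
    (hnodup : (xs ++ ys).Nodup)
    (hfresh : ∀ z ∈ xs ++ ys, ∀ u ∈ ss' ++ ts', z ∉ u.varsIn)
    (μ' : Subst F)
    (hμ'x : ∀ i < ss.length, μ' (xs[i]!) = ss'[i]!)
    (hμ'y : ∀ i < ss.length, μ' (ys[i]!) = ts'[i]!)
    (hμ'id : ∀ z, z ∉ xs → z ∉ ys → μ' z = Tm.var z) :
    IsSimMGU μ' (Tm.app f ss') (Tm.app f (xs.map Tm.var))
      (Tm.app f ts') (Tm.app f (ys.map Tm.var)) ∧
    substClass
      ({⟨{Tm.app f (xs.map Tm.var)} ∪ {Tm.app f (ys.map Tm.var)} ∪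
           ⋃₀ {G | G ∈ Γs} ∪ ⋃₀ {G | G ∈ Δs}, Tm.app f ss'⟩,
        ⟨{Tm.app f (xs.map Tm.var)} ∪ {Tm.app f (ys.map Tm.var)} ∪
           ⋃₀ {G | G ∈ Γs} ∪ ⋃₀ {G | G ∈ Δs}, Tm.app f ts'⟩} : CClass F) μ' =
    ({⟨{Tm.app f ss'} ∪ {Tm.app f ts'} ∪
         substConstr (⋃₀ {G | G ∈ Γs}) μ' ∪ substConstr (⋃₀ {G | G ∈ Δs}) μ',
       Tm.app f ss'⟩,
      ⟨{Tm.app f ss'} ∪ {Tm.app f ts'} ∪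
         substConstr (⋃₀ {G | G ∈ Γs}) μ' ∪ substConstr (⋃₀ {G | G ∈ Δs}) μ',
       Tm.app f ts'⟩} : CClass F) := by
  have hlss' : ss'.length = xs.length := by omega
  have hlts' : ts'.length = ys.length := by omega
  -- μ' is the identity on variables of terms in ss' ++ ts'
  have hid : ∀ u ∈ ss' ++ ts', ∀ x ∈ u.varsList, μ' x = Tm.var x := by
    intro u hu x hx
    refine hμ'id x (fun hmem => ?_) (fun hmem => ?_)
    · exact hfresh x (List.mem_append_left _ hmem) u hu hx
    · exact hfresh x (List.mem_append_right _ hmem) u hu hx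
  have hfixs : (Tm.app f ss').subst μ' = Tm.app f ss' := by
    refine Tm.subst_eq_self μ' _ (fun x hx => ?_)
    obtain ⟨u, hu, hxu⟩ := Tm.mem_varsList_app.1 hx
    exact hid u (List.mem_append_left _ hu) x hxu
  have hfixt : (Tm.app f ts').subst μ' = Tm.app f ts' := by
    refine Tm.subst_eq_self μ' _ (fun x hx => ?_)
    obtain ⟨u, hu, hxu⟩ := Tm.mem_varsList_app.1 hx
    exact hid u (List.mem_append_right _ hu) x hxu
  -- μ' maps the variable lists to ss' and ts'
  have hmapx : xs.map μ' = ss' := by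
    refine List.ext_getElem (by simp; omega) (fun i h1 h2 => ?_)
    have h1' : i < xs.length := by simpa using h1
    have := hμ'x i (by omega)
    rw [getElem!_pos xs i h1', getElem!_pos ss' i h2] at this
    simpa [List.getElem_map] using this
  have hmapy : ys.map μ' = ts' := by
    refine List.ext_getElem (by simp; omega) (fun i h1 h2 => ?_)
    have h1' : i < ys.length := by simpa using h1
    have := hμ'y i (by omega)
    rw [getElem!_pos ys i h1', getElem!_pos ts' i h2] at this
    simpa [List.getElem_map] using this
  have hsubx : (Tm.app f (xs.map Tm.var)).subst μ' = Tm.app f ss' := by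
    rw [Tm.subst_app_s9, List.map_map]
    congr 1
    rw [← hmapx]
    exact List.map_congr_left fun a _ => Tm.subst_var_s9 μ' a
  have hsuby : (Tm.app f (ys.map Tm.var)).subst μ' = Tm.app f ts' := by
    rw [Tm.subst_app_s9, List.map_map]
    congr 1
    rw [← hmapy]
    exact List.map_congr_left fun a _ => Tm.subst_var_s9 μ' a
  constructor
  · refine ⟨?_, ?_, ?_⟩
    · show (Tm.app f ss').subst μ' = (Tm.app f (xs.map Tm.var)).subst μ'
      rw [hfixs, hsubx]
    · show (Tm.app f ts').subst μ' = (Tm.app f (ys.map Tm.var)).subst μ'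
      rw [hfixt, hsuby]
    · intro τ hτ1 hτ2
      refine ⟨τ, funext fun z => ?_⟩
      have key : ∀ (zs : List ℕ) (us : List (Tm F)), zs.length = ss.length →
          us.length = ss.length → (∀ i < ss.length, μ' (zs[i]!) = us[i]!) →
          (Tm.app f us).subst τ = (Tm.app f (zs.map Tm.var)).subst τ →
          ∀ z ∈ zs, τ z = (μ' z).subst τ := by
        intro zs us hzl hul hμz hτ z hz
        rw [Tm.subst_app_s9, Tm.subst_app_s9, List.map_map] at hτ
        have hlists : us.map (·.subst τ) = zs.map (fun a => (Tm.var a).subst τ) := by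
          injection hτ
        obtain ⟨i, hi, rfl⟩ := List.mem_iff_getElem.1 hz
        have hius : i < us.length := by omega
        have h1 : us[i].subst τ = (Tm.var zs[i]).subst τ := by
          have := congrArg (fun l => l[i]!) hlists
          simpa [getElem!_pos, hius, hi] using this
        have h2 : μ' zs[i] = us[i] := by
          have := hμz i (by omega)
          rwa [getElem!_pos zs i hi, getElem!_pos us i hius] at this
        rw [Tm.subst_var_s9] at h1
        rw [h2, ← h1]
      show τ z = (μ' z).subst τ
      by_cases hzx : z ∈ xs
      · exact key xs ss' hx (by omega) hμ'x hτ1 z hzx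
      · by_cases hzy : z ∈ ys
        · exact key ys ts' hy (by omega) hμ'y hτ2 z hzy
        · rw [hμ'id z hzx hzy, Tm.subst_var_s9]
  · have hconstr : substConstr
        ({Tm.app f (xs.map Tm.var)} ∪ {Tm.app f (ys.map Tm.var)} ∪
          ⋃₀ {G | G ∈ Γs} ∪ ⋃₀ {G | G ∈ Δs}) μ' =
        {Tm.app f ss'} ∪ {Tm.app f ts'} ∪
          substConstr (⋃₀ {G | G ∈ Γs}) μ' ∪ substConstr (⋃₀ {G | G ∈ Δs}) μ' := by
      simp only [substConstr, Set.image_union, Set.image_singleton, hsubx, hsuby]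
    show (fun ct => CTerm.subst ct μ') '' _ = _
    rw [Set.image_insert_eq, Set.image_singleton]
    simp only [CTerm.subst, hconstr, hfixs, hfixt]

end NGCC
end
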